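/- In Sp_{2n}(F) over a field F, define for 1 ≤ k ≤ n the polynomial function α_k(g) = det of the k×k submatrix of g with rows 2n+1-k,...,2n and columns 1,...,k. Then: (1) α_k(n_1 g n_2) = α_k(g) for all upper-triangular unipotent elements n_1, n_2 of the standard Borel of Sp_{2n}; (2) α_k(d_n(t_1,...,t_n) g d_n(s_1,...,s_n)) = (∏_{i=1}^k t_i^{-1} s_i) α_k(g), where d_n(t) = diag(t_1,...,t_n,t_n^{-1},...,t_1^{-1}); (3) if w is a Weyl group element (signed permutation matrix) of Sp_{2n} with α_k(w) ≠ 0 for all 1 ≤ k ≤ n, then w is the longest Weyl element w_0. -/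

import Mathlib

/-- The `k × k` lower-left minor `α_k(g)`: the determinant of the submatrix of the
`2n × 2n` matrix `g` with rows `2n+1-k,…,2n` and columns `1,…,k` (1-based). -/
def alphaMinor {F : Type*} [CommRing F] (n k : ℕ) (hk : k ≤ 2 * n)
    (g : Matrix (Fin (2 * n)) (Fin (2 * n)) F) : F :=
  Matrix.det (Matrix.of fun s t : Fin k =>
    g ⟨2 * n - k + s.val, by have := s.isLt; omega⟩ ⟨t.val, by have := t.isLt; omega⟩)

/-- The torus element `d_n(t) = diag(t_1,…,t_n,t_n⁻¹,…,t_1⁻¹)` of `Sp_{2n}`. -/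
noncomputable def dnMat {F : Type*} [Field F] (n : ℕ) (t : Fin n → F) :
    Matrix (Fin (2 * n)) (Fin (2 * n)) F :=
  Matrix.diagonal fun i =>
    if h : i.val < n then t ⟨i.val, h⟩
    else (t ⟨2 * n - 1 - i.val, by have := i.isLt; omega⟩)⁻¹

/-- The antidiagonal symplectic form defining the realization of `Sp_{2n}` used in the paper. -/
def Jsp {F : Type*} [CommRing F] (n : ℕ) : Matrix (Fin (2 * n)) (Fin (2 * n)) F :=
  Matrix.of fun i j =>
    if i.val + j.val = 2 * n - 1 then (if i.val < n then 1 else -1) else 0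

namespace Stmt10Aux

variable {F : Type*} [Field F] {n k : ℕ}

def rIdx (n k : ℕ) (hk : k ≤ 2 * n) (s : Fin k) : Fin (2 * n) :=
  ⟨2 * n - k + s.val, by have := s.isLt; omega⟩

def cIdx (n k : ℕ) (hk : k ≤ 2 * n) (t : Fin k) : Fin (2 * n) :=
  ⟨t.val, by have := t.isLt; omega⟩

lemma alphaMinor_eq (n k : ℕ) (hk : k ≤ 2 * n) (g : Matrix (Fin (2*n)) (Fin (2*n)) F) :
    alphaMinor n k hk g = (g.submatrix (rIdx n k hk) (cIdx n k hk)).det := rfl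

def rEmb (n k : ℕ) (hk : k ≤ 2 * n) : Fin k ↪ Fin (2 * n) :=
  ⟨rIdx n k hk, by
    intro a b h
    simp only [rIdx, Fin.mk.injEq] at h
    exact Fin.ext (by omega)⟩

def cEmb (n k : ℕ) (hk : k ≤ 2 * n) : Fin k ↪ Fin (2 * n) :=
  ⟨cIdx n k hk, by
    intro a b h
    simp only [cIdx, Fin.mk.injEq] at h
    exact Fin.ext h⟩

lemma sum_r (hk : k ≤ 2 * n) (f : Fin (2 * n) → F)
    (h0 : ∀ a : Fin (2 * n), a.val < 2 * n - k → f a = 0) :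
    ∑ a, f a = ∑ s : Fin k, f (rIdx n k hk s) := by
  have hm := Finset.sum_map Finset.univ (rEmb n k hk) f
  simp only [rEmb, Function.Embedding.coeFn_mk] at hm
  rw [show (∑ s : Fin k, f (rIdx n k hk s)) = _ from hm.symm]
  refine (Finset.sum_subset (Finset.subset_univ _) ?_).symm
  intro a _ ha
  refine h0 a ?_
  by_contra hge
  push_neg at hge
  refine ha ?_
  simp only [Finset.mem_map, Finset.mem_univ, true_and]
  exact ⟨⟨a.val - (2 * n - k), by have := a.isLt; omega⟩, by
    exact Fin.ext (by show 2 * n - k + (a.val - (2 * n - k)) = a.val; omega)⟩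

lemma sum_c (hk : k ≤ 2 * n) (f : Fin (2 * n) → F)
    (h0 : ∀ a : Fin (2 * n), k ≤ a.val → f a = 0) :
    ∑ a, f a = ∑ s : Fin k, f (cIdx n k hk s) := by
  have hm := Finset.sum_map Finset.univ (cEmb n k hk) f
  simp only [cEmb, Function.Embedding.coeFn_mk] at hm
  rw [show (∑ s : Fin k, f (cIdx n k hk s)) = _ from hm.symm]
  refine (Finset.sum_subset (Finset.subset_univ _) ?_).symm
  intro a _ ha
  refine h0 a ?_
  by_contra hge
  push_neg at hge
  refine ha ?_
  simp only [Finset.mem_map, Finset.mem_univ, true_and]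
  exact ⟨⟨a.val, hge⟩, by
    exact Fin.ext rfl⟩

lemma left_unip (hk : k ≤ 2 * n) (u g : Matrix (Fin (2*n)) (Fin (2*n)) F)
    (hu0 : ∀ i j : Fin (2 * n), j < i → u i j = 0) (hu1 : ∀ i, u i i = 1) :
    alphaMinor n k hk (u * g) = alphaMinor n k hk g := by
  rw [alphaMinor_eq, alphaMinor_eq]
  have key : (u * g).submatrix (rIdx n k hk) (cIdx n k hk)
      = (u.submatrix (rIdx n k hk) (rIdx n k hk)) * (g.submatrix (rIdx n k hk) (cIdx n k hk)) := by
    ext s t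
    simp only [Matrix.mul_apply, Matrix.submatrix_apply]
    exact sum_r hk (fun a => u (rIdx n k hk s) a * g a (cIdx n k hk t)) (by
      intro a ha
      have : u (rIdx n k hk s) a = 0 := hu0 _ _ (by
        simp only [Fin.lt_def, rIdx]; omega)
      simp only [this, zero_mul])
  rw [key, Matrix.det_mul]
  have hdet : (u.submatrix (rIdx n k hk) (rIdx n k hk)).det = 1 := by
    rw [Matrix.det_of_upperTriangular]
    · refine Finset.prod_eq_one fun s _ => ?_
      simp only [Matrix.submatrix_apply]; exact hu1 _
    · intro i j hij
      simp only [Matrix.submatrix_apply]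
      refine hu0 _ _ ?_
      simp only [Fin.lt_def, rIdx]
      simp only [id] at hij
      have := hij
      simp only [Fin.lt_def] at this
      omega
  rw [hdet, one_mul]

lemma right_unip (hk : k ≤ 2 * n) (u g : Matrix (Fin (2*n)) (Fin (2*n)) F)
    (hu0 : ∀ i j : Fin (2 * n), j < i → u i j = 0) (hu1 : ∀ i, u i i = 1) :
    alphaMinor n k hk (g * u) = alphaMinor n k hk g := by
  rw [alphaMinor_eq, alphaMinor_eq]
  have key : (g * u).submatrix (rIdx n k hk) (cIdx n k hk)
      = (g.submatrix (rIdx n k hk) (cIdx n k hk)) * (u.submatrix (cIdx n k hk) (cIdx n k hk)) := by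
    ext s t
    simp only [Matrix.mul_apply, Matrix.submatrix_apply]
    exact sum_c hk (fun b => g (rIdx n k hk s) b * u b (cIdx n k hk t)) (by
      intro b hb
      have : u b (cIdx n k hk t) = 0 := hu0 _ _ (by
        simp only [Fin.lt_def, cIdx]
        have := t.isLt; omega)
      simp only [this, mul_zero])
  rw [key, Matrix.det_mul]
  have hdet : (u.submatrix (cIdx n k hk) (cIdx n k hk)).det = 1 := by
    rw [Matrix.det_of_upperTriangular]
    · refine Finset.prod_eq_one fun s _ => ?_
      simp only [Matrix.submatrix_apply]; exact hu1 _
    · intro i j hij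
      simp only [Matrix.submatrix_apply]
      refine hu0 _ _ ?_
      simp only [Fin.lt_def, cIdx]
      simp only [id] at hij
      have := hij
      simp only [Fin.lt_def] at this
      omega
  rw [hdet, mul_one]

end Stmt10Aux

namespace Stmt10Aux

variable {F : Type*} [Field F] {n k : ℕ}

lemma diag_part (hk1 : 1 ≤ k) (hk2 : k ≤ n)
    (g : Matrix (Fin (2*n)) (Fin (2*n)) F) (t s : Fin n → F) :
    alphaMinor n k (by omega) (dnMat n t * g * dnMat n s) =
      (∏ i : Fin k, (t ⟨i.val, Nat.lt_of_lt_of_le i.isLt hk2⟩)⁻¹ *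
        s ⟨i.val, Nat.lt_of_lt_of_le i.isLt hk2⟩) * alphaMinor n k (by omega) g := by
  have hk : k ≤ 2 * n := by omega
  rw [alphaMinor_eq n k hk, alphaMinor_eq n k hk]
  have key : (dnMat n t * g * dnMat n s).submatrix (rIdx n k hk) (cIdx n k hk)
      = Matrix.of (fun i j : Fin k => (t ⟨k - 1 - i.val, by have := i.isLt; omega⟩)⁻¹ *
          Matrix.of (fun i j : Fin k => s ⟨j.val, by have := j.isLt; omega⟩ *
            (g.submatrix (rIdx n k hk) (cIdx n k hk)) i j) i j) := by
    ext i j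
    simp only [Matrix.submatrix_apply, dnMat, Matrix.mul_diagonal, Matrix.diagonal_mul,
      Matrix.of_apply]
    have hr : ¬ ((rIdx n k hk i).val < n) := by
      simp only [rIdx]; have := i.isLt; omega
    have hc : (cIdx n k hk j).val < n := by
      simp only [cIdx]; have := j.isLt; omega
    rw [dif_neg hr, dif_pos hc]
    have e1 : (⟨2 * n - 1 - (rIdx n k hk i).val, by have := (rIdx n k hk i).isLt; omega⟩ : Fin n)
        = ⟨k - 1 - i.val, by have := i.isLt; omega⟩ := by
      apply Fin.ext; simp only [rIdx]; have := i.isLt; omega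
    have e2 : (⟨(cIdx n k hk j).val, hc⟩ : Fin n) = ⟨j.val, by have := j.isLt; omega⟩ := by
      apply Fin.ext; simp only [cIdx]
    rw [e1, e2]; ring
  rw [key, Matrix.det_mul_column, Matrix.det_mul_row]
  have hrev : (∏ i : Fin k, (t ⟨k - 1 - i.val, by have := i.isLt; omega⟩)⁻¹)
      = ∏ i : Fin k, (t ⟨i.val, by have := i.isLt; omega⟩)⁻¹ := by
    refine Fintype.prod_equiv (Fin.revPerm) _ _ fun x => ?_
    congr 2
    apply Fin.ext
    simp only [Fin.revPerm_apply, Fin.val_rev]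
    omega
  rw [hrev, Finset.prod_mul_distrib]
  ring

variable (w : Matrix (Fin (2*n)) (Fin (2*n)) F) (σ : Equiv.Perm (Fin (2*n)))

lemma wzero (hsupp : ∀ i j : Fin (2 * n), w i j ≠ 0 ↔ i = σ j)
    {i j : Fin (2*n)} (h : i ≠ σ j) : w i j = 0 := by
  by_contra h'
  exact h ((hsupp i j).mp h')

lemma sigma_bound (hsupp : ∀ i j : Fin (2 * n), w i j ≠ 0 ↔ i = σ j)
    (hα : ∀ (k : ℕ) (hk1 : 1 ≤ k) (hk2 : k ≤ n), alphaMinor n k (by omega) w ≠ 0)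
    (j : Fin (2*n)) (hj : j.val < n) : 2 * n - (j.val + 1) ≤ (σ j).val := by
  by_contra hlt
  push_neg at hlt
  have hk : j.val + 1 ≤ 2 * n := by omega
  refine hα (j.val + 1) (by omega) (by omega) ?_
  rw [alphaMinor_eq n (j.val+1) hk]
  apply Matrix.det_eq_zero_of_column_eq_zero ⟨j.val, by omega⟩
  intro i
  simp only [Matrix.submatrix_apply]
  have hcj : cIdx n (j.val+1) hk ⟨j.val, by omega⟩ = j := Fin.ext rfl
  rw [hcj]
  refine wzero w σ hsupp ?_
  intro he
  have : (rIdx n (j.val+1) hk i).val = (σ j).val := by rw [he]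
  simp only [rIdx] at this
  omega

lemma sigma_low (hsupp : ∀ i j : Fin (2 * n), w i j ≠ 0 ↔ i = σ j)
    (hα : ∀ (k : ℕ) (hk1 : 1 ≤ k) (hk2 : k ≤ n), alphaMinor n k (by omega) w ≠ 0) :
    ∀ (m : ℕ) (j : Fin (2*n)), j.val = m → j.val < n → (σ j).val = 2 * n - 1 - j.val := by
  intro m
  induction m using Nat.strong_induction_on with
  | _ m ih =>
    intro j hjm hjn
    have h1 : 2 * n - (j.val + 1) ≤ (σ j).val := sigma_bound w σ hsupp hα j hjn
    by_contra hne
    have hgt : 2 * n - j.val ≤ (σ j).val := by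
      have := (σ j).isLt
      omega
    set v := (σ j).val with hv
    have hvlt := (σ j).isLt
    have hiv : 2 * n - 1 - v < m := by omega
    set i : Fin (2*n) := ⟨2 * n - 1 - v, by omega⟩ with hi
    have hin : i.val < n := by simp only [hi]; omega
    have := ih (2 * n - 1 - v) (by omega) i rfl hin
    have hσi : (σ i).val = v := by simp only [hi] at this ⊢; omega
    have : σ i = σ j := Fin.ext (by rw [hσi])
    have : i = j := σ.injective this
    have : i.val = j.val := by rw [this]
    simp only [hi] at this
    omega

lemma entry_eq (hsupp : ∀ i j : Fin (2 * n), w i j ≠ 0 ↔ i = σ j)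
    (hJ : w.transpose * Jsp n * w = Jsp n) (i j : Fin (2*n)) :
    w (σ i) i * Jsp (F := F) n (σ i) (σ j) * w (σ j) j = Jsp n i j := by
  have h := congrFun (congrFun hJ i) j
  rw [Matrix.mul_apply, Finset.sum_eq_single (σ j)] at h
  · rw [Matrix.mul_apply, Finset.sum_eq_single (σ i)] at h
    · rw [Matrix.transpose_apply] at h
      exact h
    · intro a _ hne
      rw [Matrix.transpose_apply, wzero w σ hsupp hne, zero_mul]
    · intro habs
      exact absurd (Finset.mem_univ _) habs
  · intro b _ hne
    rw [wzero w σ hsupp hne, mul_zero]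
  · intro habs
    exact absurd (Finset.mem_univ _) habs

end Stmt10Aux

/-- In `Sp_{2n}(F)`: (1) `α_k` is invariant under left and right
multiplication by upper-triangular unipotent matrices; (2) `α_k(d_n(t) g d_n(s))
= (∏_{i=1}^k t_i⁻¹ s_i) α_k(g)`; (3) if `w` is a signed permutation matrix lying in
`Sp_{2n}` (w.r.t. the antidiagonal form `Jsp`) with `α_k(w) ≠ 0` for all `1 ≤ k ≤ n`,
then `w` is the longest Weyl element, i.e. its underlying permutation is `j ↦ rev j`. -/
theorem stmt10 {F : Type*} [Field F] (n : ℕ) (hn : 0 < n) :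
    (∀ (k : ℕ) (hk1 : 1 ≤ k) (hk2 : k ≤ n)
        (g u₁ u₂ : Matrix (Fin (2 * n)) (Fin (2 * n)) F),
      (∀ i j : Fin (2 * n), j < i → u₁ i j = 0) → (∀ i, u₁ i i = 1) →
      (∀ i j : Fin (2 * n), j < i → u₂ i j = 0) → (∀ i, u₂ i i = 1) →
      alphaMinor n k (by omega) (u₁ * g * u₂) = alphaMinor n k (by omega) g) ∧
    (∀ (k : ℕ) (hk1 : 1 ≤ k) (hk2 : k ≤ n)
        (g : Matrix (Fin (2 * n)) (Fin (2 * n)) F) (t s : Fin n → F),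
      (∀ i, t i ≠ 0) → (∀ i, s i ≠ 0) →
      alphaMinor n k (by omega) (dnMat n t * g * dnMat n s) =
        (∏ i : Fin k, (t ⟨i.val, by have := i.isLt; omega⟩)⁻¹ *
          s ⟨i.val, by have := i.isLt; omega⟩) * alphaMinor n k (by omega) g) ∧
    (∀ (w : Matrix (Fin (2 * n)) (Fin (2 * n)) F) (σ : Equiv.Perm (Fin (2 * n))),
      (∀ i j : Fin (2 * n), w i j ≠ 0 ↔ i = σ j) →
      (∀ j : Fin (2 * n), w (σ j) j = 1 ∨ w (σ j) j = -1) →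
      w.transpose * Jsp n * w = Jsp n →
      (∀ (k : ℕ) (hk1 : 1 ≤ k) (hk2 : k ≤ n), alphaMinor n k (by omega) w ≠ 0) →
      ∀ j : Fin (2 * n), σ j = j.rev) := by

  refine ⟨?_, ?_, ?_⟩
  · intro k hk1 hk2 g u₁ u₂ h10 h11 h20 h21
    have hk : k ≤ 2 * n := by omega
    calc alphaMinor n k (by omega) (u₁ * g * u₂)
        = alphaMinor n k hk (u₁ * (g * u₂)) := by rw [mul_assoc]
      _ = alphaMinor n k hk (g * u₂) := Stmt10Aux.left_unip hk u₁ (g * u₂) h10 h11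
      _ = alphaMinor n k (by omega) g := Stmt10Aux.right_unip hk u₂ g h20 h21
  · intro k hk1 hk2 g t s _ _
    exact Stmt10Aux.diag_part hk1 hk2 g t s
  · intro w σ hsupp hsign hJ hα j
    have hlow : ∀ jj : Fin (2 * n), jj.val < n → (σ jj).val = 2 * n - 1 - jj.val :=
      fun jj hh => Stmt10Aux.sigma_low w σ hsupp hα jj.val jj rfl hh
    apply Fin.ext
    rw [Fin.val_rev]
    by_cases hj : j.val < n
    · have := hlow j hj
      have := j.isLt
      omega
    · push_neg at hj
      have hjlt := j.isLt
      set i : Fin (2 * n) := ⟨2 * n - 1 - j.val, by omega⟩ with hi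
      have hiv : i.val = 2 * n - 1 - j.val := rfl
      have hin : i.val < n := by omega
      have hσi : σ i = j := by
        apply Fin.ext
        rw [hlow i hin]
        omega
      have hent := Stmt10Aux.entry_eq w σ hsupp hJ i j
      rw [hσi] at hent
      have hne : Jsp (F := F) n i j ≠ 0 := by
        simp only [Jsp, Matrix.of_apply]
        rw [if_pos (by omega), if_pos hin]
        exact one_ne_zero
      have hJne : Jsp (F := F) n j (σ j) ≠ 0 := by
        intro h0
        rw [h0, mul_zero, zero_mul] at hent
        exact hne hent.symm
      have hsum : j.val + (σ j).val = 2 * n - 1 := by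
        by_contra hc
        refine hJne ?_
        simp only [Jsp, Matrix.of_apply, if_neg hc]
      omega
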